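/- Supermartingale inequality for pair interaction (one step, n individuals): In the finite pair-interaction model with equal rates, define Z_p(t) = Σ_{i,j ∈ [n]} ‖x_i(t) − x_j(t)‖². Then for every t, Z_p(t) − Z_p(t+1) ≥ 4 Σ_{i ∈ [n]} ‖x_i(t) − x_i(t+1)‖². -/

import Mathlib

/-- **Supermartingale inequality for pair interaction (one step, `n` individuals).**
In the finite pair-interaction model with equal rates — at each time `t` a matching
`M t` of pairwise disjoint pairs of distinct individuals is given together with rates
`μ t p ∈ (0, 1/2]`; a matched pair within distance `ε` approaches each other equally
at its rate, and every other individual keeps its opinion — the quantity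
`Z_p(t) = Σ_{i,j} ‖x_i(t) − x_j(t)‖²` satisfies
`Z_p(t) − Z_p(t+1) ≥ 4 Σ_i ‖x_i(t) − x_i(t+1)‖²` for every `t`. -/
theorem pair_interaction_supermartingale (n d : ℕ) (hn : 1 ≤ n) (hd : 1 ≤ d)
    (ε : ℝ) (hε : 0 < ε)
    (x : ℕ → Fin n → EuclideanSpace ℝ (Fin d))
    (M : ℕ → Finset (Fin n × Fin n)) (μ : ℕ → Fin n × Fin n → ℝ)
    (hM_ne : ∀ t, ∀ p ∈ M t, p.1 ≠ p.2)
    (hM_disj : ∀ t, ∀ p ∈ M t, ∀ q ∈ M t, p ≠ q →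
      p.1 ≠ q.1 ∧ p.1 ≠ q.2 ∧ p.2 ≠ q.1 ∧ p.2 ≠ q.2)
    (hμ : ∀ t, ∀ p ∈ M t, μ t p ∈ Set.Ioc (0 : ℝ) (1 / 2))
    (hupd : ∀ t, ∀ p ∈ M t, ‖x t p.1 - x t p.2‖ ≤ ε →
      x (t + 1) p.1 = x t p.1 + μ t p • (x t p.2 - x t p.1) ∧
      x (t + 1) p.2 = x t p.2 + μ t p • (x t p.1 - x t p.2))
    (hkeep : ∀ t (k : Fin n),
      (∀ p ∈ M t, (k = p.1 ∨ k = p.2) → ε < ‖x t p.1 - x t p.2‖) →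
      x (t + 1) k = x t k) :
    ∀ t : ℕ,
      (∑ i, ∑ j, ‖x t i - x t j‖ ^ 2) - (∑ i, ∑ j, ‖x (t + 1) i - x (t + 1) j‖ ^ 2) ≥
        4 * ∑ i, ‖x t i - x (t + 1) i‖ ^ 2 := by
  classical
  intro t
  set δ : Fin n → EuclideanSpace ℝ (Fin d) := fun k => x (t + 1) k - x t k with hδdef
  set A : Finset (Fin n × Fin n) :=
    (M t).filter (fun p => ‖x t p.1 - x t p.2‖ ≤ ε) with hAdef
  -- values of δ on an active pair
  have hpair : ∀ p ∈ A, δ p.1 = μ t p • (x t p.2 - x t p.1) ∧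
      δ p.2 = -(μ t p • (x t p.2 - x t p.1)) := by
    intro p hp
    rw [hAdef, Finset.mem_filter] at hp
    obtain ⟨h1, h2⟩ := hupd t p hp.1 hp.2
    refine ⟨?_, ?_⟩
    · simp [hδdef, h1]
    · simp only [hδdef, h2]
      rw [← smul_neg]
      simp [neg_sub]
  -- δ vanishes outside the union of active pairs
  have hzero : ∀ k : Fin n, k ∉ A.biUnion (fun p => {p.1, p.2}) → δ k = 0 := by
    intro k hk
    simp only [Finset.mem_biUnion, not_exists] at hk
    have hk' : x (t + 1) k = x t k := by
      apply hkeep t k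
      intro p hp hkp
      by_contra h
      push_neg at h
      have hpA : p ∈ A := by
        rw [hAdef, Finset.mem_filter]; exact ⟨hp, h⟩
      have : k ∈ ({p.1, p.2} : Finset (Fin n)) := by
        rcases hkp with h' | h' <;> simp [h']
      exact hk p ⟨hpA, this⟩
    simp [hδdef, hk']
  -- the sets {p.1, p.2}, p ∈ A, are pairwise disjoint
  have hdisj : (↑A : Set (Fin n × Fin n)).PairwiseDisjoint
      (fun p : Fin n × Fin n => ({p.1, p.2} : Finset (Fin n))) := by
    intro p hp q hq hpq
    simp only [Finset.coe_filter, Set.mem_setOf_eq, hAdef] at hp hq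
    obtain ⟨h1, h2, h3, h4⟩ := hM_disj t p hp.1 q hq.1 hpq
    simp only [Function.onFun]
    rw [Finset.disjoint_left]
    intro k hk1 hk2
    simp only [Finset.mem_insert, Finset.mem_singleton] at hk1 hk2
    rcases hk1 with rfl | rfl <;> rcases hk2 with h | h <;> tauto
  -- generic reduction: a sum over all individuals of a quantity vanishing where
  -- δ vanishes reduces to a sum over active pairs
  have key : ∀ (β : Type) (_ : AddCommMonoid β), ∀ (g : Fin n → β),
      (∀ k, δ k = 0 → g k = 0) → ∑ k, g k = ∑ p ∈ A, (g p.1 + g p.2) := by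
    intro β _ g hg
    rw [← Finset.sum_subset (Finset.subset_univ (A.biUnion fun p => {p.1, p.2}))
      (fun k _ hk => hg k (hzero k hk))]
    rw [Finset.sum_biUnion hdisj]
    refine Finset.sum_congr rfl (fun p hp => ?_)
    have hpM : p ∈ M t := by
      rw [hAdef, Finset.mem_filter] at hp; exact hp.1
    exact Finset.sum_pair (hM_ne t p hpM)
  -- sum of δ is zero
  have hsumδ : ∑ k, δ k = 0 := by
    rw [key _ inferInstance δ (fun k h => h)]
    refine Finset.sum_eq_zero (fun p hp => ?_)
    obtain ⟨h1, h2⟩ := hpair p hp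
    rw [h1, h2, add_neg_cancel]
  -- key dissipation inequality
  have hineq : ∑ k, ((inner ℝ (x t k) (δ k) : ℝ) + ‖δ k‖ ^ 2) ≤ 0 := by
    rw [key ℝ inferInstance _ (fun k h => by simp [h])]
    refine Finset.sum_nonpos (fun p hp => ?_)
    have hpM : p ∈ M t := by rw [hAdef, Finset.mem_filter] at hp; exact hp.1
    obtain ⟨hc0, hc2⟩ := hμ t p hpM
    obtain ⟨h1, h2⟩ := hpair p hp
    set c := μ t p
    set w := x t p.2 - x t p.1 with hw
    have hiw : (inner ℝ (x t p.1) w : ℝ) - inner ℝ (x t p.2) w = -(‖w‖ ^ 2) := by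
      rw [← inner_sub_left]
      have h' : x t p.1 - x t p.2 = -w := by rw [hw]; abel
      rw [h', inner_neg_left, real_inner_self_eq_norm_sq]
    rw [h1, h2]
    rw [real_inner_smul_right, inner_neg_right, real_inner_smul_right,
      norm_neg, norm_smul, Real.norm_eq_abs, abs_of_pos hc0, mul_pow]
    nlinarith [sq_nonneg (‖w‖ : ℝ), sq_nonneg (c * ‖w‖)]
  -- expansion of the squared distances at time t+1
  have expand : ∀ i j, ‖x (t + 1) i - x (t + 1) j‖ ^ 2 =
      ‖x t i - x t j‖ ^ 2 + 2 * (inner ℝ (x t i - x t j) (δ i - δ j) : ℝ)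
        + ‖δ i - δ j‖ ^ 2 := by
    intro i j
    have h : x (t + 1) i - x (t + 1) j = (x t i - x t j) + (δ i - δ j) := by
      simp only [hδdef]; abel
    rw [h, norm_add_sq_real]
  -- cross term
  have cross : ∑ i, ∑ j, (inner ℝ (x t i - x t j) (δ i - δ j) : ℝ)
      = 2 * n * ∑ i, (inner ℝ (x t i) (δ i) : ℝ) := by
    have expand2 : ∀ i j : Fin n, (inner ℝ (x t i - x t j) (δ i - δ j) : ℝ) =
        ((inner ℝ (x t i) (δ i) : ℝ) + inner ℝ (x t j) (δ j))
          - ((inner ℝ (x t i) (δ j) : ℝ) + inner ℝ (x t j) (δ i)) := by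
      intro i j
      simp only [inner_sub_left, inner_sub_right]
      ring
    simp_rw [expand2, Finset.sum_sub_distrib, Finset.sum_add_distrib]
    have e1 : ∑ i : Fin n, ∑ _j : Fin n, (inner ℝ (x t i) (δ i) : ℝ)
        = n * ∑ i, (inner ℝ (x t i) (δ i) : ℝ) := by
      simp [Finset.sum_const, Finset.card_univ, mul_comm, Finset.mul_sum]
    have e2 : ∑ _i : Fin n, ∑ j : Fin n, (inner ℝ (x t j) (δ j) : ℝ)
        = n * ∑ i, (inner ℝ (x t i) (δ i) : ℝ) := by
      simp [Finset.sum_const, Finset.card_univ]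
    have e3 : ∑ i : Fin n, ∑ j : Fin n, (inner ℝ (x t i) (δ j) : ℝ) = 0 := by
      simp only [← inner_sum, hsumδ, inner_zero_right, Finset.sum_const_zero]
    have e4 : ∑ i : Fin n, ∑ j : Fin n, (inner ℝ (x t j) (δ i) : ℝ) = 0 := by
      rw [Finset.sum_comm]
      simp only [← inner_sum, hsumδ, inner_zero_right, Finset.sum_const_zero]
    rw [e1, e2, e3, e4]
    ring
  -- δ-δ term
  have hδδ : ∑ i, ∑ j, ‖δ i - δ j‖ ^ 2 = 2 * n * ∑ i, ‖δ i‖ ^ 2 := by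
    have expand3 : ∀ i j : Fin n, ‖δ i - δ j‖ ^ 2 =
        (‖δ i‖ ^ 2 + ‖δ j‖ ^ 2) - 2 * (inner ℝ (δ i) (δ j) : ℝ) := by
      intro i j
      rw [norm_sub_sq_real]; ring
    simp_rw [expand3, Finset.sum_sub_distrib, Finset.sum_add_distrib]
    have e1 : ∑ i : Fin n, ∑ _j : Fin n, ‖δ i‖ ^ 2 = n * ∑ i, ‖δ i‖ ^ 2 := by
      simp [Finset.sum_const, Finset.card_univ, mul_comm, Finset.mul_sum]
    have e2 : ∑ _i : Fin n, ∑ j : Fin n, ‖δ j‖ ^ 2 = n * ∑ i, ‖δ i‖ ^ 2 := by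
      simp [Finset.sum_const, Finset.card_univ]
    have e3 : ∑ i : Fin n, ∑ j : Fin n, 2 * (inner ℝ (δ i) (δ j) : ℝ) = 0 := by
      simp only [← Finset.mul_sum, ← inner_sum, hsumδ, inner_zero_right,
        mul_zero, Finset.sum_const_zero]
    rw [e1, e2, e3]
    ring
  -- main identity
  have main : (∑ i, ∑ j, ‖x (t + 1) i - x (t + 1) j‖ ^ 2)
      = (∑ i, ∑ j, ‖x t i - x t j‖ ^ 2)
        + 4 * n * (∑ i, (inner ℝ (x t i) (δ i) : ℝ)) + 2 * n * ∑ i, ‖δ i‖ ^ 2 := by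
    simp_rw [expand, Finset.sum_add_distrib]
    have e : ∑ i : Fin n, ∑ j : Fin n, 2 * (inner ℝ (x t i - x t j) (δ i - δ j) : ℝ)
        = 2 * ∑ i, ∑ j, (inner ℝ (x t i - x t j) (δ i - δ j) : ℝ) := by
      simp [Finset.mul_sum]
    rw [e, cross, hδδ]
    ring
  -- rewrite the right-hand side
  have hrhs : ∑ i, ‖x t i - x (t + 1) i‖ ^ 2 = ∑ i, ‖δ i‖ ^ 2 := by
    refine Finset.sum_congr rfl (fun i _ => ?_)
    rw [hδdef]
    simp [norm_sub_rev (x t i) (x (t + 1) i)]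
  set I := ∑ i, (inner ℝ (x t i) (δ i) : ℝ) with hI
  set D := ∑ i, ‖δ i‖ ^ 2 with hD
  have hDnn : 0 ≤ D := Finset.sum_nonneg (fun i _ => sq_nonneg _)
  have hID : I + D ≤ 0 := by
    rw [hI, hD, ← Finset.sum_add_distrib]
    exact hineq
  rw [ge_iff_le, hrhs, main]
  rcases le_or_gt 2 n with h2 | h2
  · have h2' : (2 : ℝ) ≤ n := by exact_mod_cast h2
    nlinarith [mul_nonneg (sub_nonneg.mpr h2') hDnn]
  · -- n = 1 : nothing moves
    have hδ0 : ∀ k : Fin n, δ k = 0 := by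
      intro k
      apply hzero
      simp only [Finset.mem_biUnion, not_exists]
      intro p hp
      obtain ⟨hp, hmem⟩ := hp
      have hpM : p ∈ M t := by rw [hAdef, Finset.mem_filter] at hp; exact hp.1
      have e1 := p.1.isLt
      have e2 := p.2.isLt
      exact absurd (Fin.ext (by omega : (p.1 : ℕ) = (p.2 : ℕ))) (hM_ne t p hpM)
    have hD0 : D = 0 := by
      rw [hD]
      refine Finset.sum_eq_zero (fun i _ => by rw [hδ0 i]; simp)
    have hI0 : I = 0 := by
      rw [hI]
      refine Finset.sum_eq_zero (fun i _ => by rw [hδ0 i]; simp)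
    rw [hD0, hI0]
    simp
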